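/- For every n ≥ 3, EC(C_n) = n if and only if 3 ≤ n ≤ 6; that is, for the cycle C_n the singleton partition of the edge set is of maximum order among ec-partitions exactly when n ≤ 6, and EC(C_n) < n for all n ≥ 7. -/

import Mathlib

open SimpleGraph

/-- Two edges (as unordered pairs of vertices) share an endpoint. -/
def SharesEndpoint {V : Type*} (e f : Sym2 V) : Prop := ∃ v, v ∈ e ∧ v ∈ f

/-- `D` is an edge dominating set of `G`: `D` consists of edges of `G` and every
edge of `G` outside `D` shares an endpoint with some edge of `D`. -/
def IsEdgeDominating {V : Type*} (G : SimpleGraph V) (D : Set (Sym2 V)) : Prop :=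
  D ⊆ G.edgeSet ∧ ∀ e ∈ G.edgeSet \ D, ∃ f ∈ D, SharesEndpoint e f

/-- Two disjoint edge sets form an edge coalition: neither is an edge dominating
set but their union is. -/
def IsEdgeCoalition {V : Type*} (G : SimpleGraph V) (E₁ E₂ : Set (Sym2 V)) : Prop :=
  Disjoint E₁ E₂ ∧ ¬ IsEdgeDominating G E₁ ∧ ¬ IsEdgeDominating G E₂ ∧
    IsEdgeDominating G (E₁ ∪ E₂)

/-- An ec-partition of `G`: a partition of the edge set of `G` (into nonempty,
pairwise disjoint parts) such that every part either is a singleton edge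
dominating set, or is not an edge dominating set but forms an edge coalition
with another part. -/
def IsECPartition {V : Type*} (G : SimpleGraph V) (P : Set (Set (Sym2 V))) : Prop :=
  (∀ A ∈ P, A.Nonempty) ∧
  P.Pairwise Disjoint ∧
  ⋃₀ P = G.edgeSet ∧
  ∀ A ∈ P, ((∃ e, A = {e}) ∧ IsEdgeDominating G A) ∨
    (¬ IsEdgeDominating G A ∧ ∃ B ∈ P, B ≠ A ∧ IsEdgeCoalition G A B)

/-- The edge coalition number `EC(G)`: the maximum number of parts over all
ec-partitions of `G`. -/
noncomputable def edgeCoalitionNumber {V : Type*} (G : SimpleGraph V) : ℕ :=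
  sSup {k | ∃ P, IsECPartition G P ∧ P.ncard = k}

/-! ### Basic facts about the cycle graph -/

lemma mem_edgeSet_cycle {m : ℕ} {e : Sym2 (Fin (m+3))} :
    e ∈ (cycleGraph (m+3)).edgeSet ↔ ∃ i : Fin (m+3), e = s(i, i+1) := by
  induction e with
  | _ u v =>
    rw [SimpleGraph.mem_edgeSet,
      show (cycleGraph (m+3)).Adj u v ↔ u - v = 1 ∨ v - u = 1 from cycleGraph_adj]
    constructor
    · rintro (h | h)
      · have : u = v + 1 := by rw [sub_eq_iff_eq_add] at h; rw [h]; exact add_comm _ _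
        exact ⟨v, by rw [this, Sym2.eq_swap]⟩
      · have : v = u + 1 := by rw [sub_eq_iff_eq_add] at h; rw [h]; exact add_comm _ _
        exact ⟨u, by rw [this]⟩
    · rintro ⟨i, h⟩
      rw [Sym2.eq_iff] at h
      rcases h with ⟨rfl, rfl⟩ | ⟨rfl, rfl⟩
      · right; simp
      · left; simp

lemma two_ne_zero_fin {m : ℕ} : (1 : Fin (m+3)) + 1 ≠ 0 := by
  simp [Fin.ext_iff, Fin.val_add, Nat.mod_eq_of_lt]

lemma edge_inj {m : ℕ} {i j : Fin (m+3)} (h : s(i, i+1) = s(j, j+1)) : i = j := by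
  rw [Sym2.eq_iff] at h
  rcases h with ⟨h1, _⟩ | ⟨h1, h2⟩
  · exact h1
  · exfalso
    apply two_ne_zero_fin (m := m)
    have h3 : j + (1 + 1) = j + 0 := by
      rw [← add_assoc, ← h1, h2, add_zero]
    exact add_left_cancel h3

lemma shares_iff {m : ℕ} {i j : Fin (m+3)} :
    SharesEndpoint s(j, j+1) s(i, i+1) ↔ j = i ∨ j = i + 1 ∨ j + 1 = i := by
  constructor
  · rintro ⟨v, hv1, hv2⟩
    rw [Sym2.mem_iff] at hv1 hv2
    rcases hv1 with rfl | rfl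
    · rcases hv2 with h | h
      · exact Or.inl h
      · exact Or.inr (Or.inl h)
    · rcases hv2 with h | h
      · exact Or.inr (Or.inr h)
      · exact Or.inl (add_right_cancel h)
  · rintro (h | h | h)
    · exact ⟨j, by simp [h]⟩
    · exact ⟨j, by simp [h]⟩
    · exact ⟨j + 1, by simp [h]⟩

lemma ncard_edgeSet_cycle {m : ℕ} : ((cycleGraph (m+3)).edgeSet).ncard = m+3 := by
  have h : (cycleGraph (m+3)).edgeSet = Set.range (fun i : Fin (m+3) => s(i, i+1)) := by
    ext e; rw [mem_edgeSet_cycle]; simp [eq_comm]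
  rw [h, ← Set.image_univ, Set.ncard_image_of_injective _ (fun a b hab => edge_inj hab),
    Set.ncard_univ, Nat.card_eq_fintype_card, Fintype.card_fin]

/-! ### Counting parts of partitions -/

lemma rep_bound {V : Type*} {P : Set (Set (Sym2 V))} (hdisj : P.Pairwise Disjoint)
    (g : Set (Sym2 V) → Sym2 V) (hg : ∀ A ∈ P, g A ∈ A)
    {T : Set (Sym2 V)} (hT : ∀ A ∈ P, g A ∈ T) (hfin : T.Finite) :
    P.ncard ≤ T.ncard := by
  apply Set.ncard_le_ncard_of_injOn g hT ?_ hfin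
  intro A hA B hB hAB
  by_contra hne
  exact Set.disjoint_left.mp (hdisj hA hB hne) (hg A hA) (hAB ▸ hg B hB)

lemma part_subset {V : Type*} {G : SimpleGraph V} {P : Set (Set (Sym2 V))}
    (hP : IsECPartition G P) {A : Set (Sym2 V)} (hA : A ∈ P) : A ⊆ G.edgeSet := by
  rw [← hP.2.2.1]; exact Set.subset_sUnion_of_mem hA

lemma ecPartition_ncard_le {m : ℕ} {P : Set (Set (Sym2 (Fin (m+3))))}
    (hP : IsECPartition (cycleGraph (m+3)) P) : P.ncard ≤ m+3 := by
  classical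
  haveI : Nonempty (Sym2 (Fin (m+3))) := ⟨s(0,0)⟩
  set g : Set (Sym2 (Fin (m+3))) → Sym2 (Fin (m+3)) :=
    fun A => if h : A.Nonempty then h.some else Classical.arbitrary _ with hgdef
  have hg : ∀ A ∈ P, g A ∈ A := by
    intro A hA
    have h := hP.1 A hA
    simp only [hgdef, dif_pos h]
    exact h.some_mem
  calc P.ncard ≤ ((cycleGraph (m+3)).edgeSet).ncard :=
        rep_bound hP.2.1 g hg (fun A hA => part_subset hP hA (hg A hA)) (Set.toFinite _)
    _ = m+3 := ncard_edgeSet_cycle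

/-! ### Non-domination lemmas -/

lemma fin_ne3 {m : ℕ} : (1 + (1 + 1) : Fin (m+4)) ≠ 0 := by
  simp [Fin.ext_iff, Fin.val_add, Nat.mod_eq_of_lt]

lemma fin_ne1 {m : ℕ} : (1 : Fin (m+3)) ≠ 0 := by
  simp [Fin.ext_iff]

lemma not_dom_single {m : ℕ} (e : Sym2 (Fin (m+4))) :
    ¬ IsEdgeDominating (cycleGraph (m+4)) {e} := by
  rintro ⟨hsub, hdom⟩
  have he : e ∈ (cycleGraph (m+4)).edgeSet := hsub rfl
  obtain ⟨i, rfl⟩ := (mem_edgeSet_cycle (m := m+1)).mp he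
  have hmem : s(i+1+1, i+1+1+1) ∈ (cycleGraph (m+4)).edgeSet :=
    (mem_edgeSet_cycle (m := m+1)).mpr ⟨i+1+1, rfl⟩
  have hnotin : s(i+1+1, i+1+1+1) ∉ ({s(i, i+1)} : Set (Sym2 (Fin (m+4)))) := by
    intro h
    have h2 : i+1+1 = i := edge_inj (m := m+1) h
    have h3 : i + (1+1) = i := by rw [← add_assoc]; exact h2
    exact two_ne_zero_fin (m := m+1) (add_eq_left.mp h3)
  obtain ⟨f, hf, hsh⟩ := hdom _ ⟨hmem, hnotin⟩
  rw [Set.mem_singleton_iff] at hf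
  subst hf
  rcases (shares_iff (m := m+1)).mp hsh with h | h | h
  · have h3 : i + (1+1) = i := by rw [← add_assoc]; exact h
    exact two_ne_zero_fin (m := m+1) (add_eq_left.mp h3)
  · exact fin_ne1 (m := m+1) (add_eq_left.mp (add_right_cancel h))
  · have h3 : i + (1+(1+1)) = i := by rw [← add_assoc, ← add_assoc]; exact h
    exact fin_ne3 (add_eq_left.mp h3)

lemma not_dom_pair {m : ℕ} (e f : Sym2 (Fin (m+7))) :
    ¬ IsEdgeDominating (cycleGraph (m+7)) {e, f} := by
  rintro ⟨hsub, hdom⟩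
  have he : e ∈ (cycleGraph (m+7)).edgeSet := hsub (Set.mem_insert _ _)
  have hf : f ∈ (cycleGraph (m+7)).edgeSet := hsub (Set.mem_insert_of_mem _ rfl)
  obtain ⟨i, rfl⟩ := (mem_edgeSet_cycle (m := m+4)).mp he
  obtain ⟨k, rfl⟩ := (mem_edgeSet_cycle (m := m+4)).mp hf
  classical
  set S : Finset (Fin (m+7)) := {i-1, i, i+1, k-1, k, k+1} with hS
  have hcard : S.card ≤ 6 := by
    refine le_trans (Finset.card_insert_le _ _) (Nat.succ_le_succ ?_)
    refine le_trans (Finset.card_insert_le _ _) (Nat.succ_le_succ ?_)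
    refine le_trans (Finset.card_insert_le _ _) (Nat.succ_le_succ ?_)
    refine le_trans (Finset.card_insert_le _ _) (Nat.succ_le_succ ?_)
    refine le_trans (Finset.card_insert_le _ _) (Nat.succ_le_succ ?_)
    exact (Finset.card_singleton _).le
  have hex : ∃ j : Fin (m+7), j ∉ S := by
    by_contra hc
    push_neg at hc
    have huniv : (Finset.univ : Finset (Fin (m+7))) ⊆ S := fun x _ => hc x
    have := Finset.card_le_card huniv
    rw [Finset.card_univ, Fintype.card_fin] at this
    omega
  obtain ⟨j, hj⟩ := hex
  have hmem : s(j, j+1) ∈ (cycleGraph (m+7)).edgeSet :=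
    (mem_edgeSet_cycle (m := m+4)).mpr ⟨j, rfl⟩
  have hnotin : s(j, j+1) ∉ ({s(i,i+1), s(k,k+1)} : Set (Sym2 (Fin (m+7)))) := by
    rintro (h | h)
    · exact hj (by rw [edge_inj (m := m+4) h]; simp [hS])
    · exact hj (by rw [edge_inj (m := m+4) h]; simp [hS])
  obtain ⟨g, hg, hsh⟩ := hdom _ ⟨hmem, hnotin⟩
  rcases hg with rfl | rfl
  · rcases (shares_iff (m := m+4)).mp hsh with h | h | h
    · exact hj (by simp [hS, h])
    · exact hj (by simp [hS, h])
    · exact hj (by simp [hS, eq_sub_iff_add_eq.mpr h])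
  · rcases (shares_iff (m := m+4)).mp hsh with h | h | h
    · exact hj (by simp [hS, h])
    · exact hj (by simp [hS, h])
    · exact hj (by simp [hS, eq_sub_iff_add_eq.mpr h])

/-! ### An ec-partition of the cycle with `n` parts has all parts singletons -/

lemma parts_singleton {m : ℕ} {P : Set (Set (Sym2 (Fin (m+3))))}
    (hP : IsECPartition (cycleGraph (m+3)) P) (hcard : P.ncard = m+3)
    {A : Set (Sym2 (Fin (m+3)))} (hA : A ∈ P) {e e' : Sym2 (Fin (m+3))}
    (he : e ∈ A) (he' : e' ∈ A) : e = e' := by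
  by_contra hne
  classical
  haveI : Nonempty (Sym2 (Fin (m+3))) := ⟨s(0,0)⟩
  set g : Set (Sym2 (Fin (m+3))) → Sym2 (Fin (m+3)) :=
    fun B => if B = A then e else
      (if h : B.Nonempty then h.some else Classical.arbitrary _) with hgdef
  have hg : ∀ B ∈ P, g B ∈ B := by
    intro B hB
    by_cases hBA : B = A
    · subst hBA; simp only [hgdef, if_pos rfl]; exact he
    · have h := hP.1 B hB
      simp only [hgdef, if_neg hBA, dif_pos h]
      exact h.some_mem
  have hT : ∀ B ∈ P, g B ∈ (cycleGraph (m+3)).edgeSet \ {e'} := by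
    intro B hB
    refine ⟨part_subset hP hB (hg B hB), ?_⟩
    by_cases hBA : B = A
    · subst hBA
      simp only [hgdef, if_pos rfl]
      exact hne
    · intro hmem
      rw [Set.mem_singleton_iff] at hmem
      exact Set.disjoint_left.mp (hP.2.1 hB hA hBA) (hg B hB) (hmem ▸ he')
  have hle := rep_bound hP.2.1 g hg hT (Set.toFinite _)
  rw [Set.ncard_diff_singleton_of_mem (part_subset hP hA he'),
    ncard_edgeSet_cycle, hcard] at hle
  omega

lemma ecPartition_ncard_ne {m : ℕ} {P : Set (Set (Sym2 (Fin (m+7))))}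
    (hP : IsECPartition (cycleGraph (m+7)) P) : P.ncard ≠ m+7 := by
  intro hcard
  have hne : P.Nonempty := by
    apply Set.nonempty_of_ncard_ne_zero
    omega
  obtain ⟨A, hA⟩ := hne
  obtain ⟨e, he⟩ := hP.1 A hA
  have hAe : A = {e} := Set.eq_singleton_iff_unique_mem.mpr
    ⟨he, fun x hx => parts_singleton (m := m+4) hP hcard hA hx he⟩
  rcases hP.2.2.2 A hA with ⟨_, hdom⟩ | ⟨_, B, hB, _, _, _, _, hdom⟩
  · refine not_dom_pair e e ?_
    rw [Set.pair_eq_singleton, ← hAe]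
    exact hdom
  · obtain ⟨f, hf⟩ := hP.1 B hB
    have hBf : B = {f} := Set.eq_singleton_iff_unique_mem.mpr
      ⟨hf, fun x hx => parts_singleton (m := m+4) hP hcard hB hx hf⟩
    refine not_dom_pair e f ?_
    rw [hAe, hBf] at hdom
    exact hdom

/-! ### The singleton partition -/

def singPart (n : ℕ) : Set (Set (Sym2 (Fin n))) :=
  (fun e => ({e} : Set (Sym2 (Fin n)))) '' (cycleGraph n).edgeSet

lemma mem_singPart {m : ℕ} {A : Set (Sym2 (Fin (m+3)))} :
    A ∈ singPart (m+3) ↔ ∃ i : Fin (m+3), A = {s(i, i+1)} := by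
  simp only [singPart, Set.mem_image, mem_edgeSet_cycle]
  constructor
  · rintro ⟨e, ⟨i, rfl⟩, rfl⟩
    exact ⟨i, rfl⟩
  · rintro ⟨i, rfl⟩
    exact ⟨s(i, i+1), ⟨i, rfl⟩, rfl⟩

lemma singPart_ncard {m : ℕ} : (singPart (m+3)).ncard = m+3 := by
  rw [singPart, Set.ncard_image_of_injective _ (fun a b hab => by
    simpa using hab), ncard_edgeSet_cycle]

lemma singPart_sUnion {n : ℕ} : ⋃₀ (singPart n) = (cycleGraph n).edgeSet := by
  ext e
  simp only [Set.mem_sUnion, singPart, Set.mem_image]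
  constructor
  · rintro ⟨A, ⟨f, hf, rfl⟩, he⟩
    rwa [Set.mem_singleton_iff.mp he]
  · intro he
    exact ⟨{e}, ⟨e, he, rfl⟩, rfl⟩

lemma singPart_basic {n : ℕ} :
    (∀ A ∈ singPart n, A.Nonempty) ∧ (singPart n).Pairwise Disjoint := by
  constructor
  · rintro A ⟨e, _, rfl⟩
    exact ⟨e, rfl⟩
  · rintro A ⟨e, _, rfl⟩ B ⟨f, _, rfl⟩ hne
    rw [Set.disjoint_singleton]
    intro h
    exact hne (by rw [h])

lemma singPart_isEC_three : IsECPartition (cycleGraph 3) (singPart 3) := by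
  refine ⟨singPart_basic.1, singPart_basic.2, singPart_sUnion, ?_⟩
  intro A hA
  obtain ⟨i, rfl⟩ := (mem_singPart (m := 0)).mp hA
  left
  refine ⟨⟨_, rfl⟩, ?_, ?_⟩
  · intro x hx
    rw [Set.mem_singleton_iff.mp hx]
    exact (mem_edgeSet_cycle (m := 0)).mpr ⟨i, rfl⟩
  · rintro e ⟨he, -⟩
    obtain ⟨j, rfl⟩ := (mem_edgeSet_cycle (m := 0)).mp he
    have key : ∀ i j : Fin 3, j = i ∨ j = i + 1 ∨ j + 1 = i := by decide
    exact ⟨s(i, i+1), rfl, (shares_iff (m := 0)).mpr (key i j)⟩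

lemma singPart_isEC {m : ℕ} (k : Fin (m+4)) (hk : k ≠ 0)
    (hdom : ∀ i j : Fin (m+4),
      (j = i ∨ j = i + 1 ∨ j + 1 = i) ∨ (j = i + k ∨ j = i + k + 1 ∨ j + 1 = i + k)) :
    IsECPartition (cycleGraph (m+4)) (singPart (m+4)) := by
  refine ⟨singPart_basic.1, singPart_basic.2, singPart_sUnion, ?_⟩
  intro A hA
  obtain ⟨i, rfl⟩ := (mem_singPart (m := m+1)).mp hA
  right
  have hne : s(i+k, i+k+1) ≠ s(i, i+1) := by
    intro h
    exact hk (add_eq_left.mp (edge_inj (m := m+1) h))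
  refine ⟨not_dom_single _, {s(i+k, i+k+1)}, (mem_singPart (m := m+1)).mpr ⟨i+k, rfl⟩,
    ?_, ?_, not_dom_single _, not_dom_single _, ?_⟩
  · intro h
    exact hne (Set.singleton_eq_singleton_iff.mp h)
  · rw [Set.disjoint_singleton]
    exact fun h => hne h.symm
  · constructor
    · rintro x (hx | hx) <;> rw [Set.mem_singleton_iff.mp hx]
      · exact (mem_edgeSet_cycle (m := m+1)).mpr ⟨i, rfl⟩
      · exact (mem_edgeSet_cycle (m := m+1)).mpr ⟨i+k, rfl⟩
    · rintro e ⟨he, -⟩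
      obtain ⟨j, rfl⟩ := (mem_edgeSet_cycle (m := m+1)).mp he
      rcases hdom i j with h | h
      · exact ⟨s(i, i+1), Or.inl rfl, (shares_iff (m := m+1)).mpr h⟩
      · exact ⟨s(i+k, i+k+1), Or.inr rfl, (shares_iff (m := m+1)).mpr h⟩

/-! ### The edge coalition number of cycles -/

lemma EC_le {m : ℕ} : edgeCoalitionNumber (cycleGraph (m+3)) ≤ m+3 := by
  apply csSup_le'
  rintro x ⟨P, hP, rfl⟩
  exact ecPartition_ncard_le hP

lemma EC_eq {m : ℕ} (h : IsECPartition (cycleGraph (m+3)) (singPart (m+3))) :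
    edgeCoalitionNumber (cycleGraph (m+3)) = m+3 := by
  refine le_antisymm EC_le (le_csSup ⟨m+3, ?_⟩ ⟨singPart (m+3), h, singPart_ncard⟩)
  rintro x ⟨P, hP, rfl⟩
  exact ecPartition_ncard_le hP

lemma EC_lt {m : ℕ} : edgeCoalitionNumber (cycleGraph (m+7)) < m+7 := by
  have hle : edgeCoalitionNumber (cycleGraph (m+7)) ≤ m+6 := by
    apply csSup_le'
    rintro x ⟨P, hP, rfl⟩
    have h1 : P.ncard ≤ m+7 := ecPartition_ncard_le (m := m+4) hP
    have h2 : P.ncard ≠ m+7 := ecPartition_ncard_ne hP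
    omega
  omega

/-- For every `n ≥ 3`, `EC(C_n) = n` iff `3 ≤ n ≤ 6`; moreover `EC(C_n) < n`
for all `n ≥ 7`. -/
theorem edgeCoalitionNumber_cycleGraph_eq_iff (n : ℕ) (hn : 3 ≤ n) :
    (edgeCoalitionNumber (SimpleGraph.cycleGraph n) = n ↔ n ≤ 6) ∧
    (7 ≤ n → edgeCoalitionNumber (SimpleGraph.cycleGraph n) < n) := by
  have hlt : 7 ≤ n → edgeCoalitionNumber (SimpleGraph.cycleGraph n) < n := by
    intro h7
    obtain ⟨m, rfl⟩ : ∃ m, n = m + 7 := ⟨n - 7, by omega⟩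
    exact EC_lt
  refine ⟨⟨?_, ?_⟩, hlt⟩
  · intro hEC
    by_contra h6
    have := hlt (by omega)
    omega
  · intro h6
    interval_cases n
    · exact EC_eq (m := 0) singPart_isEC_three
    · exact EC_eq (m := 1) (singPart_isEC (m := 0) 2 (by decide) (by decide))
    · exact EC_eq (m := 2) (singPart_isEC (m := 1) 2 (by decide) (by decide))
    · exact EC_eq (m := 3) (singPart_isEC (m := 2) 3 (by decide) (by decide))
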